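/- Let α = (α₁,…,α_r) with α_i ≥ 1, and let N ≥ 1 be an integer such that N ≤ ∏_{i=1}^r (1 + α_i/(N)) (equivalently g(α,N) ≤ 1). Then p(α) ≥ (e^{N-2}/(2 N^{3/2})) · ∏_{i=1}^r (1/(2√(2N))) (1 + N/α_i)^{α_i + 1/2}. -/

import Mathlib

/-- The number of multisets of nonzero vectors in `(ℤ≥0)^r` summing componentwise to `α`. -/
noncomputable def vecPartitions {r : ℕ} (α : Fin r → ℕ) : ℕ :=
  Set.ncard {s : Multiset (Fin r → ℕ) | (∀ β ∈ s, β ≠ 0) ∧ s.sum = α}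

namespace VP

open Real Finset

lemma denom_pos (n : ℕ) (hn : 1 ≤ n) :
    0 < Real.sqrt (2*n) * ((n : ℝ) / Real.exp 1)^n := by
  have h0 : (0:ℝ) < n := by exact_mod_cast hn
  positivity

lemma sqrtpi_le_stirlingSeq (n : ℕ) (hn : 1 ≤ n) : Real.sqrt π ≤ Stirling.stirlingSeq n := by
  obtain ⟨m, rfl⟩ := Nat.exists_eq_add_of_le hn
  have h : Filter.Tendsto (Stirling.stirlingSeq ∘ Nat.succ) Filter.atTop (nhds (Real.sqrt π)) :=
    Stirling.tendsto_stirlingSeq_sqrt_pi.comp (Filter.tendsto_add_atTop_nat 1)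
  simpa [Nat.add_comm] using Stirling.stirlingSeq'_antitone.le_of_tendsto h m

lemma stirlingSeq_le (m n : ℕ) (hm : 1 ≤ m) (h : m ≤ n) :
    Stirling.stirlingSeq n ≤ Stirling.stirlingSeq m := by
  obtain ⟨a, rfl⟩ := Nat.exists_eq_add_of_le hm
  obtain ⟨b, rfl⟩ := Nat.exists_eq_add_of_le h
  have h2 := Stirling.stirlingSeq'_antitone (Nat.le_add_right a b)
  simp only [Function.comp, Nat.succ_eq_add_one] at h2
  rw [show 1 + a + b = a + b + 1 by omega, show 1 + a = a + 1 by omega]; exact h2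

lemma fact_lb (n : ℕ) (hn : 1 ≤ n) :
    Real.sqrt π * (Real.sqrt (2*n) * ((n:ℝ)/Real.exp 1)^n) ≤ n.factorial := by
  have hd := denom_pos n hn
  have h := sqrtpi_le_stirlingSeq n hn
  rw [Stirling.stirlingSeq, le_div_iff₀ hd] at h
  exact h

lemma fact_ub_aux (n : ℕ) (hn : 1 ≤ n) (c : ℝ) (hc : Stirling.stirlingSeq n ≤ c) :
    (n.factorial : ℝ) ≤ c * (Real.sqrt (2*n) * ((n:ℝ)/Real.exp 1)^n) := by
  have hd := denom_pos n hn
  rw [Stirling.stirlingSeq, div_le_iff₀ hd] at hc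
  exact hc

lemma fact_ub1 (n : ℕ) (hn : 1 ≤ n) :
    (n.factorial : ℝ) ≤ (Real.exp 1 / Real.sqrt 2) * (Real.sqrt (2*n) * ((n:ℝ)/Real.exp 1)^n) :=
  fact_ub_aux n hn _ (by simpa [Stirling.stirlingSeq_one] using stirlingSeq_le 1 n le_rfl hn)

lemma stirlingSeq_two : Stirling.stirlingSeq 2 = Real.exp 1 ^ 2 / 4 := by
  have h4 : Real.sqrt (2*(2:ℕ)) = 2 := by
    rw [show (2*(2:ℕ):ℝ) = 2^2 by norm_num, Real.sqrt_sq (by norm_num)]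
  have he : (0:ℝ) < Real.exp 1 := Real.exp_pos 1
  rw [Stirling.stirlingSeq, h4]
  rw [Nat.factorial]
  field_simp
  ring

lemma fact_ub2 (n : ℕ) (hn : 2 ≤ n) :
    (n.factorial : ℝ) ≤ (Real.exp 1 ^ 2 / 4) * (Real.sqrt (2*n) * ((n:ℝ)/Real.exp 1)^n) :=
  fact_ub_aux n (le_trans one_le_two hn) _
    (by simpa [stirlingSeq_two] using stirlingSeq_le 2 n one_le_two hn)

lemma e4_le : Real.exp 1 ^ 4 ≤ 32 * Real.sqrt π := by
  have h1 : Real.exp 1 ≤ 2.7182818286 := le_of_lt Real.exp_one_lt_d9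
  have h2 : (1.772:ℝ) ≤ Real.sqrt π := by
    rw [show (1.772:ℝ) = Real.sqrt (1.772^2) by rw [Real.sqrt_sq]; norm_num]
    apply Real.sqrt_le_sqrt
    nlinarith [Real.pi_gt_d6]
  calc Real.exp 1 ^ 4 ≤ 2.7182818286^4 := by
        apply pow_le_pow_left₀ (le_of_lt (Real.exp_pos 1)) h1
    _ ≤ 32 * 1.772 := by norm_num
    _ ≤ 32 * Real.sqrt π := by linarith

lemma aux_log (u : ℝ) (hu : 1 ≤ u) : Real.log u ≤ (u - u⁻¹) / 2 := by
  set f : ℝ → ℝ := fun x => (x - x⁻¹) / 2 - Real.log x with hf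
  have hd : ∀ x : ℝ, 1 ≤ x → HasDerivAt f ((1 + (x^2)⁻¹)/2 - x⁻¹) x := by
    intro x hx
    have hx0 : x ≠ 0 := ne_of_gt (lt_of_lt_of_le one_pos hx)
    have h1 : HasDerivAt (fun x : ℝ => (x - x⁻¹)/2) ((1 - -(x^2)⁻¹)/2) x :=
      ((hasDerivAt_id x).sub (hasDerivAt_inv hx0)).div_const 2
    have h2 := Real.hasDerivAt_log hx0
    have := h1.sub h2
    exact this.congr_deriv (by ring)
  have mono : MonotoneOn f (Set.Ici 1) := by
    apply monotoneOn_of_deriv_nonneg (convex_Ici 1)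
    · exact fun x hx => ((hd x hx).continuousAt).continuousWithinAt
    · intro x hx
      rw [interior_Ici] at hx
      exact ((hd x hx.le).differentiableAt).differentiableWithinAt
    · intro x hx
      rw [interior_Ici] at hx
      rw [(hd x hx.le).deriv]
      have hx0 : 0 < x := lt_trans one_pos hx
      rw [sub_nonneg, inv_le_iff_one_le_mul₀ hx0]
      rw [div_mul_eq_mul_div, le_div_iff₀ (by norm_num : (0:ℝ) < 2)]
      have h2 : (x^2)⁻¹ * x = x⁻¹ := by
        field_simp
      nlinarith [sq_nonneg (x - 1), inv_nonneg.2 (le_of_lt hx0),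
        mul_pos (inv_pos.2 (pow_pos hx0 2)) hx0, sq_nonneg (1 - x⁻¹),
        mul_inv_cancel₀ (ne_of_gt hx0)]
  have h1 := mono (Set.mem_Ici.2 (le_refl 1)) (Set.mem_Ici.2 hu) hu
  have : f 1 = 0 := by simp [hf]
  rw [this] at h1
  simp only [hf] at h1
  linarith

lemma f_antitone : AntitoneOn (fun x : ℝ => (x + 1/2) * (Real.log (x+1) - Real.log x))
    (Set.Ici 1) := by
  set f : ℝ → ℝ := fun x => (x + 1/2) * (Real.log (x+1) - Real.log x) with hf
  have hd : ∀ x : ℝ, 1 ≤ x → HasDerivAt f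
      ((Real.log (x+1) - Real.log x) + (x + 1/2) * ((x+1)⁻¹ - x⁻¹)) x := by
    intro x hx
    have hx0 : x ≠ 0 := ne_of_gt (lt_of_lt_of_le one_pos hx)
    have hx1 : x + 1 ≠ 0 := by positivity
    have hl1 : HasDerivAt (fun x : ℝ => Real.log (x+1)) ((x+1)⁻¹) x := by
      have := ((hasDerivAt_id x).add_const 1).log hx1
      simpa using this
    have hl2 := Real.hasDerivAt_log hx0
    have hg : HasDerivAt (fun x : ℝ => x + 1/2) 1 x := (hasDerivAt_id x).add_const (1/2)
    have := hg.mul (hl1.sub hl2)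
    exact this.congr_deriv (by simp only [Pi.sub_apply]; ring)
  apply antitoneOn_of_deriv_nonpos (convex_Ici 1)
  · exact fun x hx => ((hd x hx).continuousAt).continuousWithinAt
  · intro x hx
    rw [interior_Ici] at hx
    exact ((hd x hx.le).differentiableAt).differentiableWithinAt
  · intro x hx
    rw [interior_Ici] at hx
    rw [(hd x hx.le).deriv]
    have hx0 : 0 < x := lt_trans one_pos hx
    have hx1 : 0 < x + 1 := by linarith
    have hu : 1 ≤ (x+1)/x := by rw [le_div_iff₀ hx0]; linarith
    have hkey := aux_log ((x+1)/x) hu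
    rw [Real.log_div (ne_of_gt hx1) (ne_of_gt hx0)] at hkey
    have heq : (((x+1)/x) - ((x+1)/x)⁻¹)/2 = -((x + 1/2) * ((x+1)⁻¹ - x⁻¹)) := by
      rw [inv_div]
      field_simp
      ring
    rw [heq] at hkey
    linarith

lemma key_pow (x : ℝ) (hx : 1 ≤ x) : (1 + 1/x) ^ (x + 1/2 : ℝ) ≤ 2 * Real.sqrt 2 := by
  have hx0 : 0 < x := lt_of_lt_of_le one_pos hx
  have h1 : (0:ℝ) < 1 + 1/x := by positivity
  have hlog : (x + 1/2) * Real.log (1 + 1/x) ≤ (3/2) * Real.log 2 := by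
    have h2 : (1:ℝ) + 1/x = (x+1)/x := by field_simp
    rw [h2, Real.log_div (by positivity) (ne_of_gt hx0)]
    have := f_antitone (Set.mem_Ici.2 (le_refl 1)) (Set.mem_Ici.2 hx) hx
    simp only at this
    calc (x + 1/2) * (Real.log (x+1) - Real.log x)
        ≤ (1 + 1/2) * (Real.log (1+1) - Real.log 1) := this
      _ = (3/2) * Real.log 2 := by norm_num
  calc (1+1/x) ^ (x + 1/2 : ℝ) = Real.exp ((x+1/2) * Real.log (1+1/x)) := by
        rw [Real.rpow_def_of_pos h1]; ring_nf
    _ ≤ Real.exp ((3/2) * Real.log 2) := Real.exp_le_exp.2 hlog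
    _ = 2 * Real.sqrt 2 := by
        rw [mul_comm, ← Real.rpow_def_of_pos (by norm_num : (0:ℝ) < 2)]
        rw [show (3:ℝ)/2 = 1 + 1/2 by norm_num, Real.rpow_add (by norm_num : (0:ℝ) < 2),
          Real.rpow_one, Real.sqrt_eq_rpow]

lemma per_factor (a N : ℕ) (ha : 1 ≤ a) (hN : 1 ≤ N) :
    (1 + (N:ℝ)/a) ^ ((a:ℝ) + 1/2) * (1 + (a:ℝ)/N)^N
      ≤ ((a+N).choose N : ℝ) * (2 * Real.sqrt (2*N)) := by
  have hA : (0:ℝ) < a := by exact_mod_cast ha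
  have hn : (0:ℝ) < N := by exact_mod_cast hN
  have hA1 : (1:ℝ) ≤ a := by exact_mod_cast ha
  have hn1 : (1:ℝ) ≤ N := by exact_mod_cast hN
  rcases eq_or_lt_of_le ha with h1 | ha2
  · -- a = 1
    subst h1
    have hch : ((1+N).choose N : ℝ) = (N:ℝ) + 1 := by
      rw [Nat.add_comm, Nat.choose_succ_self_right]; push_cast; ring
    rw [hch]
    simp only [Nat.cast_one, div_one]
    have e2 : ((1:ℝ) + 1/2) = (3:ℝ)/2 := by norm_num
    rw [e2]
    have e3 : (1 + (N:ℝ)) ^ ((3:ℝ)/2) = (1 + (N:ℝ)) * Real.sqrt (1 + N) := by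
      rw [show (3:ℝ)/2 = 1 + 1/2 by norm_num, Real.rpow_add (by positivity), Real.rpow_one,
        ← Real.sqrt_eq_rpow]
    rw [e3]
    have e4 : Real.sqrt (1 + (N:ℝ)) = Real.sqrt N * Real.sqrt (1 + 1/N) := by
      rw [← Real.sqrt_mul (by positivity)]
      congr 1
      field_simp
      ring
    have e5 : Real.sqrt (1 + 1/(N:ℝ)) * (1 + 1/(N:ℝ))^N = (1 + 1/(N:ℝ)) ^ ((N:ℝ) + 1/2) := by
      rw [Real.rpow_add (by positivity), Real.rpow_natCast, Real.sqrt_eq_rpow]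
      ring
    have key := key_pow (N:ℝ) hn1
    have e6 : Real.sqrt (2*(N:ℝ)) = Real.sqrt 2 * Real.sqrt N := Real.sqrt_mul (by norm_num) _
    calc (1 + (N:ℝ)) * Real.sqrt (1+N) * (1 + (1:ℝ)/N)^N
        = (1 + (N:ℝ)) * Real.sqrt N * (Real.sqrt (1 + 1/(N:ℝ)) * (1 + 1/(N:ℝ))^N) := by
          rw [e4]; ring
      _ = (1 + (N:ℝ)) * Real.sqrt N * ((1 + 1/(N:ℝ)) ^ ((N:ℝ) + 1/2)) := by rw [e5]
      _ ≤ (1 + (N:ℝ)) * Real.sqrt N * (2 * Real.sqrt 2) := by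
          apply mul_le_mul_of_nonneg_left key (by positivity)
      _ = ((N:ℝ) + 1) * (2 * Real.sqrt (2*N)) := by rw [e6]; ring
  · rcases eq_or_lt_of_le hN with h2 | hN2
    · -- N = 1
      have h2' : N = 1 := h2.symm
      subst h2'
      have hch : ((a+1).choose 1 : ℝ) = (a:ℝ) + 1 := by
        rw [Nat.choose_one_right]; push_cast; ring
      rw [hch]
      simp only [Nat.cast_one, div_one]
      have key := key_pow (a:ℝ) hA1
      have e1 : (1 + (a:ℝ))^1 = (a:ℝ) + 1 := by rw [pow_one, add_comm]
      rw [e1]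
      have e2 : (2:ℝ)*1 = 2 := by norm_num
      rw [e2]
      calc (1 + 1/(a:ℝ)) ^ ((a:ℝ) + 1/2) * ((a:ℝ)+1)
          ≤ (2 * Real.sqrt 2) * ((a:ℝ)+1) := by
            apply mul_le_mul_of_nonneg_right key (by positivity)
        _ = ((a:ℝ)+1) * (2 * Real.sqrt 2) := by ring
    · -- a ≥ 2, N ≥ 2
      have ha2' : 2 ≤ a := ha2
      have hN2' : 2 ≤ N := hN2
      set A := (a:ℝ) with hAdef
      set n := (N:ℝ) with hndef
      set E := Real.exp 1 with hEdef
      have hE : 0 < E := Real.exp_pos 1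
      have hAn : (0:ℝ) < A + n := by linarith
      have hcast : ((a+N).choose N : ℝ) = ((a+N).factorial : ℝ) / (N.factorial * a.factorial) := by
        rw [Nat.cast_choose ℝ (Nat.le_add_left N a), Nat.add_sub_cancel]
      rw [hcast]
      rw [div_mul_eq_mul_div, le_div_iff₀ (by positivity)]
      have e3 : (1 + n/A) ^ (A + 1/2:ℝ) = ((A+n)/A)^a * Real.sqrt ((A+n)/A) := by
        have e1 : (1 + n/A) = (A+n)/A := by field_simp
        rw [e1, Real.rpow_add (by positivity), Real.rpow_natCast, ← Real.sqrt_eq_rpow]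
      have e2 : (1 + A/n) = (A+n)/n := by field_simp; ring
      have p1 : ((A+n)/A)^a * (A/E)^a = ((A+n)/E)^a := by
        rw [← mul_pow]
        congr 1
        field_simp
      have p2 : ((A+n)/n)^N * (n/E)^N = ((A+n)/E)^N := by
        rw [← mul_pow]
        congr 1
        field_simp
      have p3 : Real.sqrt ((A+n)/A) * Real.sqrt (2*A) = Real.sqrt (2*(A+n)) := by
        rw [← Real.sqrt_mul (by positivity)]
        congr 1
        field_simp
      calc (1 + n/A) ^ (A + 1/2:ℝ) * (1 + A/n)^N * ((N.factorial : ℝ) * a.factorial)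
          ≤ (1 + n/A) ^ (A + 1/2:ℝ) * (1 + A/n)^N *
              (((E^2/4) * (Real.sqrt (2*n) * (n/E)^N)) * ((E^2/4) * (Real.sqrt (2*A) * (A/E)^a))) := by
            apply mul_le_mul_of_nonneg_left _ (by positivity)
            exact mul_le_mul (fact_ub2 N hN2') (fact_ub2 a ha2') (by positivity) (by positivity)
        _ = (E^4/16) * ((((A+n)/A)^a * (A/E)^a) * (((A+n)/n)^N * (n/E)^N) *
              (Real.sqrt ((A+n)/A) * Real.sqrt (2*A)) * Real.sqrt (2*n)) := by
            rw [e3, e2]; ring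
        _ = (E^4/16) * (((A+n)/E)^a * ((A+n)/E)^N * Real.sqrt (2*(A+n)) * Real.sqrt (2*n)) := by
            rw [p1, p2, p3]
        _ ≤ (2*Real.sqrt π) * (((A+n)/E)^a * ((A+n)/E)^N * Real.sqrt (2*(A+n)) * Real.sqrt (2*n)) := by
            apply mul_le_mul_of_nonneg_right _ (by positivity)
            have := e4_le
            linarith
        _ = (Real.sqrt π * (Real.sqrt (2*(A+n)) * ((A+n)/E)^(a+N))) * (2 * Real.sqrt (2*n)) := by
            rw [pow_add]; ring
        _ ≤ ((a+N).factorial : ℝ) * (2 * Real.sqrt (2*n)) := by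
            apply mul_le_mul_of_nonneg_right _ (by positivity)
            have := fact_lb (a+N) (by omega)
            have hc : ((a+N:ℕ):ℝ) = A + n := by push_cast; ring
            rw [hc] at this
            exact this

lemma sorted_eq {M : ℕ} (f g : Fin M → ℕ)
    (h : Multiset.map f Finset.univ.val = Multiset.map g Finset.univ.val) :
    f ∘ Tuple.sort f = g ∘ Tuple.sort g := by
  apply List.ofFn_injective
  refine List.Perm.eq_of_sortedLE ((Tuple.monotone_sort f).sortedLE_ofFn)
    ((Tuple.monotone_sort g).sortedLE_ofFn) ?_
  have p1 := (Tuple.sort f).ofFn_comp_perm f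
  have p3 := (Tuple.sort g).ofFn_comp_perm g
  have p2 : (List.ofFn f).Perm (List.ofFn g) := by
    rw [← Multiset.coe_eq_coe, ← Fin.univ_val_map, ← Fin.univ_val_map]
    exact h
  exact p1.trans (p2.trans p3.symm)

lemma msum_apply {r : ℕ} (s : Multiset (Fin r → ℕ)) (i : Fin r) :
    s.sum i = (s.map (fun β => β i)).sum := by
  induction s using Multiset.induction with
  | empty => simp
  | cons a t ih => simp [ih]

lemma card_le_sum (s : Multiset ℕ) (h : ∀ x ∈ s, 1 ≤ x) : Multiset.card s ≤ s.sum := by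
  induction s using Multiset.induction with
  | empty => simp
  | cons a t ih =>
      simp only [Multiset.card_cons, Multiset.sum_cons]
      have h1 := h a (Multiset.mem_cons_self a t)
      have h2 := ih (fun x hx => h x (Multiset.mem_cons_of_mem hx))
      omega

lemma sum_swap_aux {r : ℕ} (s : Multiset (Fin r → ℕ)) :
    (s.map (fun β => ∑ i, β i)).sum = ∑ i, s.sum i := by
  induction s using Multiset.induction with
  | empty => simp
  | cons a t ih => simp [ih, Finset.sum_add_distrib]

lemma Sfinite {r : ℕ} (α : Fin r → ℕ) :
    {s : Multiset (Fin r → ℕ) | (∀ β ∈ s, β ≠ 0) ∧ s.sum = α}.Finite := by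
  classical
  set n := ∑ i, α i with hn
  set g : (Σ _k : Fin (n+1), (Fin _k → (Fin r → Fin (n+1)))) → Multiset (Fin r → ℕ) :=
    fun p => Multiset.map (fun j => fun i => ((p.2 j i : ℕ))) Finset.univ.val with hg
  apply Set.Finite.subset (Set.finite_range g)
  rintro s ⟨hne, hsum⟩
  have hone : ∀ β ∈ s, 1 ≤ ∑ i, β i := by
    intro β hb
    rcases Nat.eq_zero_or_pos (∑ i, β i) with h0 | h1
    · exfalso
      apply hne β hb
      funext i
      exact Finset.sum_eq_zero_iff.1 h0 i (Finset.mem_univ i)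
    · exact h1
  have hcard : Multiset.card s ≤ n := by
    have h1 : Multiset.card s = Multiset.card (s.map (fun β => ∑ i, β i)) :=
      (Multiset.card_map _ _).symm
    rw [h1]
    calc Multiset.card (s.map (fun β => ∑ i, β i))
        ≤ (s.map (fun β => ∑ i, β i)).sum := by
          apply card_le_sum
          intro x hx
          obtain ⟨β, hb, rfl⟩ := Multiset.mem_map.1 hx
          exact hone β hb
      _ = ∑ i, s.sum i := sum_swap_aux s
      _ = n := by rw [hsum]
  have hbd : ∀ β ∈ s, ∀ i, β i ≤ n := by
    intro β hb i
    have h1 : β i ≤ s.sum i := by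
      rw [msum_apply]
      exact Multiset.single_le_sum (fun x _ => Nat.zero_le x) _
        (Multiset.mem_map_of_mem _ hb)
    have h2 : s.sum i = α i := by rw [hsum]
    have h3 : α i ≤ n := Finset.single_le_sum (f := α) (fun i _ => Nat.zero_le _)
      (Finset.mem_univ i)
    omega
  obtain ⟨l, hl⟩ : ∃ l : List (Fin r → ℕ), (l : Multiset (Fin r → ℕ)) = s :=
    ⟨s.toList, Multiset.coe_toList s⟩
  have hlen : l.length < n + 1 := by
    have : Multiset.card (l : Multiset (Fin r → ℕ)) = l.length := Multiset.coe_card l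
    rw [hl] at this
    omega
  have hfd : ∀ (j : Fin l.length) (i : Fin r), l.get j i < n + 1 := by
    intro j i
    have hmem : l.get j ∈ s := by
      rw [← hl]
      apply Multiset.mem_coe.2
      have := List.get_mem l j
      simpa using this
    exact Nat.lt_succ_of_le (hbd _ hmem i)
  refine ⟨⟨⟨l.length, hlen⟩, fun j i => ⟨l.get j i, hfd j i⟩⟩, ?_⟩
  show Multiset.map (fun j => fun i => ((⟨l.get j i, hfd j i⟩ : Fin (n+1)) : ℕ))
      Finset.univ.val = s
  have heq : (fun (j : Fin l.length) => fun i => ((⟨l.get j i, hfd j i⟩ : Fin (n+1)) : ℕ))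
      = fun j => l.get j := rfl
  rw [heq, Fin.univ_val_map, ← hl]
  congr 1
  exact List.ofFn_get l

lemma count_lemma {r : ℕ} (α : Fin r → ℕ) (M : ℕ) :
    ∏ i, Nat.multichoose M (α i) ≤ M.factorial * vecPartitions α := by
  classical
  set S := {s : Multiset (Fin r → ℕ) | (∀ β ∈ s, β ≠ 0) ∧ s.sum = α} with hS
  set e : (Fin r → ℕ) → ℕ := fun β => Encodable.encode β with he'
  have he : Function.Injective e := Encodable.encode_injective
  set fOf : (∀ i, Sym (Fin M) (α i)) → (Fin M → (Fin r → ℕ)) :=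
    fun σ j i => Multiset.count j (σ i : Multiset (Fin M)) with hfOf
  have hinj : Function.Injective fOf := by
    intro σ τ hh
    funext i
    apply Sym.coe_injective
    ext j
    exact congrFun (congrFun hh j) i
  set D : Finset (Fin M → (Fin r → ℕ)) := Finset.univ.image fOf with hD
  have hDcard : D.card = ∏ i, Nat.multichoose M (α i) := by
    rw [hD, Finset.card_image_of_injective _ hinj, Finset.card_univ, Fintype.card_pi]
    refine Finset.prod_congr rfl fun i _ => ?_
    rw [Sym.card_sym_eq_multichoose, Fintype.card_fin]
  have hDsum : ∀ f ∈ D, ∑ j, f j = α := by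
    intro f hf
    obtain ⟨σ, -, rfl⟩ := Finset.mem_image.1 hf
    funext i
    rw [Finset.sum_apply]
    show ∑ j, Multiset.count j (σ i : Multiset (Fin M)) = α i
    rw [Multiset.sum_count_eq_card (fun a _ => Finset.mem_univ a)]
    exact (σ i).2
  set Φ : (Fin M → (Fin r → ℕ)) → Multiset (Fin r → ℕ) :=
    fun f => (Multiset.map f Finset.univ.val).filter (fun β => β ≠ 0) with hΦ
  have hdecomp : ∀ f : Fin M → (Fin r → ℕ), Multiset.map f Finset.univ.val
      = Φ f + Multiset.replicate (M - (Φ f).card) 0 := by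
    intro f
    have h0 : (Multiset.map f Finset.univ.val).filter (fun β => ¬ β ≠ 0)
        = Multiset.replicate (M - (Φ f).card) 0 := by
      rw [Multiset.eq_replicate]
      constructor
      · have htot : (Φ f).card
            + Multiset.card ((Multiset.map f Finset.univ.val).filter (fun β => ¬ β ≠ 0))
            = M := by
          rw [hΦ, ← Multiset.card_add, Multiset.filter_add_not]
          simp
        omega
      · intro b hb
        have := (Multiset.mem_filter.1 hb).2
        simpa using this
    conv_lhs => rw [← Multiset.filter_add_not (fun β => β ≠ 0) (Multiset.map f Finset.univ.val)]
    rw [h0]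
  have hmemS : ∀ f ∈ D, Φ f ∈ S := by
    intro f hf
    constructor
    · intro β hb
      exact (Multiset.mem_filter.1 hb).2
    · have h1 : (Φ f).sum = (Multiset.map f Finset.univ.val).sum := by
        conv_rhs => rw [hdecomp f]
        rw [Multiset.sum_add, Multiset.sum_replicate, smul_zero, add_zero]
      rw [h1]
      have := hDsum f hf
      rwa [Finset.sum] at this
  have hfib : ∀ s ∈ D.image Φ, (D.filter (fun g => Φ g = s)).card ≤ M.factorial := by
    intro s _
    have hcard : (D.filter (fun g => Φ g = s)).card
        ≤ (Finset.univ : Finset (Equiv.Perm (Fin M))).card := by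
      apply Finset.card_le_card_of_injOn (fun g => Tuple.sort (e ∘ g))
        (fun _ _ => Finset.mem_univ _)
      intro g₁ h₁ g₂ h₂ hsort
      simp only [Finset.coe_filter, Set.mem_setOf_eq, Finset.mem_filter] at h₁ h₂
      have hmul : Multiset.map g₁ Finset.univ.val = Multiset.map g₂ Finset.univ.val := by
        rw [hdecomp g₁, hdecomp g₂, h₁.2, h₂.2]
      have hmul' : Multiset.map (e ∘ g₁) Finset.univ.val
          = Multiset.map (e ∘ g₂) Finset.univ.val := by
        rw [← Multiset.map_map, ← Multiset.map_map, hmul]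
      have hs₁ := sorted_eq (e ∘ g₁) (e ∘ g₂) hmul'
      have hsort' : Tuple.sort (e ∘ g₁) = Tuple.sort (e ∘ g₂) := hsort
      rw [hsort'] at hs₁
      have hcomp : g₁ ∘ (Tuple.sort (e ∘ g₂) : Equiv.Perm (Fin M))
          = g₂ ∘ (Tuple.sort (e ∘ g₂)) := by
        funext j
        exact he (congrFun hs₁ j)
      funext j
      have := congrFun hcomp ((Tuple.sort (e ∘ g₂))⁻¹ j)
      simpa using this
    rwa [Finset.card_univ, Fintype.card_perm, Fintype.card_fin] at hcard
  have hmain : D.card ≤ M.factorial * (D.image Φ).card :=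
    Finset.card_le_mul_card_image D M.factorial hfib
  have himg : (D.image Φ).card ≤ vecPartitions α := by
    rw [vecPartitions]
    calc (D.image Φ).card = (↑(D.image Φ) : Set (Multiset (Fin r → ℕ))).ncard :=
          (Set.ncard_coe_finset _).symm
      _ ≤ S.ncard := by
          apply Set.ncard_le_ncard _ (Sfinite α)
          intro s hs
          obtain ⟨f, hf, rfl⟩ := Finset.mem_image.1 (Finset.mem_coe.1 hs)
          exact hmemS f hf
  calc ∏ i, Nat.multichoose M (α i) = D.card := hDcard.symm
    _ ≤ M.factorial * (D.image Φ).card := hmain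
    _ ≤ M.factorial * vecPartitions α := Nat.mul_le_mul_left _ himg

end VP

open Real Finset in
theorem vecPartitions_lower_bound_of_N (r : ℕ) (α : Fin r → ℕ) (hα : ∀ i, 1 ≤ α i)
    (N : ℕ) (hN : 1 ≤ N) (hgN : (N : ℝ) ≤ ∏ i, (1 + (α i : ℝ) / N)) :
    Real.exp ((N : ℝ) - 2) / (2 * (N : ℝ) ^ ((3 : ℝ) / 2)) *
        ∏ i, (1 / (2 * Real.sqrt (2 * N))) *
          (1 + (N : ℝ) / (α i : ℝ)) ^ ((α i : ℝ) + 1 / 2)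
      ≤ (vecPartitions α : ℝ) := by
  have hn0 : (0:ℝ) < N := by exact_mod_cast hN
  have hn1 : (1:ℝ) ≤ N := by exact_mod_cast hN
  set n : ℝ := (N:ℝ) with hndef
  -- counting
  have hcount : ∏ i, ((α i + N).choose N) ≤ (N+1).factorial * vecPartitions α := by
    have h := VP.count_lemma α (N+1)
    have heq : ∏ i, Nat.multichoose (N+1) (α i) = ∏ i, ((α i + N).choose N) := by
      refine Finset.prod_congr rfl fun i _ => ?_
      rw [Nat.multichoose_eq]
      have h1 : N + 1 + α i - 1 = α i + N := by omega
      rw [h1]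
      have h2 : (α i + N).choose N = (α i + N).choose (α i + N - (α i)) := by
        congr 1
        omega
      rw [h2, Nat.choose_symm (Nat.le_add_right _ _)]
    rwa [heq] at h
  have hV : ((∏ i, ((α i + N).choose N) : ℕ) : ℝ)
      ≤ ((N+1).factorial : ℝ) * (vecPartitions α : ℝ) := by
    exact_mod_cast hcount
  -- analytic facts
  have G2 : Real.exp (n - 2) * (((N+1).factorial : ℕ) : ℝ) ≤ 2 * n ^ ((3:ℝ)/2) * n^N := by
    have hfac : (((N+1).factorial : ℕ) : ℝ) = ((N:ℝ)+1) * (N.factorial : ℝ) := by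
      rw [Nat.factorial_succ]; push_cast; ring
    have hub := VP.fact_ub1 N hN
    have h32 : n ^ ((3:ℝ)/2) = n * Real.sqrt n := by
      rw [show (3:ℝ)/2 = 1 + 1/2 by norm_num, Real.rpow_add hn0, Real.rpow_one,
        ← Real.sqrt_eq_rpow]
    have hsq : Real.sqrt (2*n) = Real.sqrt 2 * Real.sqrt n := Real.sqrt_mul (by norm_num) _
    have hEN : ((n/Real.exp 1)^N : ℝ) = n^N / Real.exp n := by
      rw [div_pow, Real.exp_one_pow]
    have hs2 : Real.sqrt 2 ≠ 0 := by positivity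
    calc Real.exp (n-2) * (((N+1).factorial : ℕ) : ℝ)
        ≤ Real.exp (n-2) * (((N:ℝ)+1) * ((Real.exp 1/Real.sqrt 2)
            * (Real.sqrt (2*n) * (n/Real.exp 1)^N))) := by
          rw [hfac, hndef]
          apply mul_le_mul_of_nonneg_left _ (le_of_lt (Real.exp_pos _))
          apply mul_le_mul_of_nonneg_left hub (by positivity)
      _ = ((N:ℝ)+1) * (Real.exp (n-2) * Real.exp 1 / Real.exp n) * Real.sqrt n * n^N := by
          rw [hsq, hEN]
          field_simp
      _ = ((N:ℝ)+1) * Real.exp (-1) * Real.sqrt n * n^N := by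
          rw [show Real.exp (n-2) * Real.exp 1 / Real.exp n = Real.exp (-1) by
            rw [← Real.exp_add, ← Real.exp_sub]; congr 1; ring]
      _ ≤ 2 * n ^ ((3:ℝ)/2) * n^N := by
          rw [h32]
          have he2 : (2:ℝ) ≤ Real.exp 1 := by
            have := Real.add_one_le_exp (1:ℝ); linarith
          have key : ((N:ℝ)+1) * Real.exp (-1) ≤ 2 * n := by
            have hinv : Real.exp (-1) ≤ 1/2 := by
              rw [Real.exp_neg]
              rw [inv_le_comm₀ (Real.exp_pos 1) (by norm_num)]
              linarith
            have hN2 : (N:ℝ) + 1 ≤ 2 * n := by rw [hndef]; linarith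
            nlinarith [Real.exp_pos (-1)]
          calc ((N:ℝ)+1) * Real.exp (-1) * Real.sqrt n * n^N
              ≤ (2*n) * Real.sqrt n * n^N := by
                apply mul_le_mul_of_nonneg_right
                  (mul_le_mul_of_nonneg_right key (Real.sqrt_nonneg n))
                  (pow_nonneg hn0.le N)
            _ = 2 * (n * Real.sqrt n) * n^N := by ring
  -- per-factor consequences
  set t : Fin r → ℝ := fun i =>
    1/(2*Real.sqrt (2*n)) * (1+n/(α i:ℝ))^((α i:ℝ)+1/2) with htdef
  have ht0 : ∀ i, 0 ≤ t i := by
    intro i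
    have : (0:ℝ) < 1 + n/(α i:ℝ) := by positivity
    positivity
  have hstep : ∀ i, t i * (1+(α i:ℝ)/n)^N ≤ ((α i + N).choose N : ℝ) := by
    intro i
    have hp := VP.per_factor (α i) N (hα i) hN
    have h2s : (0:ℝ) < 2*Real.sqrt (2*n) := by positivity
    calc t i * (1+(α i:ℝ)/n)^N
        = ((1+n/(α i:ℝ))^((α i:ℝ)+1/2) * (1+(α i:ℝ)/n)^N) / (2*Real.sqrt (2*n)) := by
          rw [htdef]; ring
      _ ≤ (((α i + N).choose N : ℝ) * (2*Real.sqrt (2*n))) / (2*Real.sqrt (2*n)) := by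
          gcongr
      _ = ((α i + N).choose N : ℝ) := by field_simp
  have hprod : ∏ i, (t i * (1+(α i:ℝ)/n)^N) ≤ ∏ i, ((α i + N).choose N : ℝ) :=
    Finset.prod_le_prod (fun i _ => by
      have h1 : (0:ℝ) ≤ 1 + (α i:ℝ)/n := by positivity
      exact mul_nonneg (ht0 i) (pow_nonneg h1 N)) (fun i _ => hstep i)
  have hpow : n^N ≤ ∏ i, (1+(α i:ℝ)/n)^N := by
    calc n^N ≤ (∏ i, (1+(α i:ℝ)/n))^N := pow_le_pow_left₀ hn0.le hgN N
      _ = ∏ i, (1+(α i:ℝ)/n)^N := by rw [Finset.prod_pow]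
  have hT : 0 ≤ ∏ i, t i := Finset.prod_nonneg (fun i _ => ht0 i)
  have c1 : (∏ i, t i) * n^N ≤ ((∏ i, ((α i + N).choose N) : ℕ) : ℝ) := by
    calc (∏ i, t i) * n^N ≤ (∏ i, t i) * ∏ i, (1+(α i:ℝ)/n)^N :=
          mul_le_mul_of_nonneg_left hpow hT
      _ = ∏ i, (t i * (1+(α i:ℝ)/n)^N) := (Finset.prod_mul_distrib).symm
      _ ≤ ∏ i, ((α i + N).choose N : ℝ) := hprod
      _ = ((∏ i, ((α i + N).choose N) : ℕ) : ℝ) := by push_cast; rfl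
  -- final assembly
  rw [div_mul_eq_mul_div, div_le_iff₀ (by positivity : (0:ℝ) < 2 * n ^ ((3:ℝ)/2))]
  have hmulN : Real.exp (n-2) * (∏ i, t i) * n^N
      ≤ (vecPartitions α : ℝ) * (2 * n ^ ((3:ℝ)/2)) * n^N := by
    calc Real.exp (n-2) * (∏ i, t i) * n^N
        = Real.exp (n-2) * ((∏ i, t i) * n^N) := by ring
      _ ≤ Real.exp (n-2) * ((∏ i, ((α i + N).choose N) : ℕ) : ℝ) :=
          mul_le_mul_of_nonneg_left c1 (le_of_lt (Real.exp_pos _))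
      _ ≤ Real.exp (n-2) * (((N+1).factorial : ℝ) * (vecPartitions α : ℝ)) :=
          mul_le_mul_of_nonneg_left hV (le_of_lt (Real.exp_pos _))
      _ = (Real.exp (n-2) * ((N+1).factorial : ℝ)) * (vecPartitions α : ℝ) := by ring
      _ ≤ (2 * n ^ ((3:ℝ)/2) * n^N) * (vecPartitions α : ℝ) :=
          mul_le_mul_of_nonneg_right G2 (Nat.cast_nonneg _)
      _ = (vecPartitions α : ℝ) * (2 * n ^ ((3:ℝ)/2)) * n^N := by ring
  exact le_of_mul_le_mul_right hmulN (pow_pos hn0 N)
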